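/- Let H be a Hilbert space and let U, V be bounded linear operators on H. Then the range of U is contained in the range of V if and only if there exists λ > 0 such that U U* ≤ λ² V V* (in the sense of positive operators), if and only if U = V W for some bounded linear operator W on H. -/

import Mathlib

open scoped ComplexInnerProductSpace

/-- Range membership criterion: if `⟪x, f⟫` is dominated by `c * ‖V† f‖`, then `x ∈ range V`. -/
lemma mem_range_of_inner_bound
    {H : Type*} [NormedAddCommGroup H] [InnerProductSpace ℂ H] [CompleteSpace H]
    (V : H →L[ℂ] H) (x : H) (c : ℝ)
    (h : ∀ f : H, ‖⟪x, f⟫‖ ≤ c * ‖ContinuousLinearMap.adjoint V f‖) :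
    x ∈ Set.range V := by
  set A : H →ₗ[ℂ] H := (ContinuousLinearMap.adjoint V).toLinearMap with hA
  have hker : LinearMap.ker A ≤ LinearMap.ker ((innerSL ℂ x).toLinearMap) := by
    intro f hf
    have hf' : A f = 0 := hf
    have hle := h f
    have hAf : ‖ContinuousLinearMap.adjoint V f‖ = 0 := by
      simpa [hA] using congrArg norm hf'
    rw [hAf, mul_zero] at hle
    have : ⟪x, f⟫ = 0 := norm_le_zero_iff.mp hle
    simpa [LinearMap.mem_ker] using this
  set L₀ : (H ⧸ LinearMap.ker A) →ₗ[ℂ] ℂ :=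
    (LinearMap.ker A).liftQ ((innerSL ℂ x).toLinearMap) hker with hL₀
  set S : Submodule ℂ H := LinearMap.range A with hS
  set Ll : S →ₗ[ℂ] ℂ := L₀.comp A.quotKerEquivRange.symm.toLinearMap with hLl
  have hLl_eval : ∀ f : H, Ll ⟨A f, LinearMap.mem_range_self A f⟩ = ⟪x, f⟫ := by
    intro f
    have h1 : A.quotKerEquivRange.symm ⟨A f, LinearMap.mem_range_self A f⟩ =
        Submodule.Quotient.mk f :=
      A.quotKerEquivRange_symm_apply_image f (LinearMap.mem_range_self A f)
    simp [hLl, h1, hL₀, Submodule.liftQ_apply]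
  have hbound : ∀ s : S, ‖Ll s‖ ≤ c * ‖s‖ := by
    rintro ⟨s, hs⟩
    obtain ⟨f, rfl⟩ := hs
    rw [hLl_eval f]
    simpa [hA] using h f
  set Lc : S →L[ℂ] ℂ := Ll.mkContinuous c hbound with hLc
  obtain ⟨g, hg, -⟩ := exists_extension_norm_eq S Lc
  set z : H := (InnerProductSpace.toDual ℂ H).symm g with hz
  have hzg : ∀ f : H, ⟪z, f⟫ = g f := fun f => InnerProductSpace.toDual_symm_apply
  refine ⟨z, ?_⟩
  refine (ext_inner_right ℂ fun f => ?_)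
  have h1 : ⟪V z, f⟫ = ⟪z, ContinuousLinearMap.adjoint V f⟫ :=
    (ContinuousLinearMap.adjoint_inner_right V z f).symm
  have h2 : ⟪z, ContinuousLinearMap.adjoint V f⟫ = g (A f) := hzg (A f)
  have h3 : g (A f) = Lc ⟨A f, LinearMap.mem_range_self A f⟩ := hg ⟨A f, LinearMap.mem_range_self A f⟩
  have h4 : Lc ⟨A f, LinearMap.mem_range_self A f⟩ = ⟪x, f⟫ := hLl_eval f
  rw [h1, h2, h3, h4]

/-- Douglas: range inclusion gives a factorization. -/
lemma factor_of_range_subset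
    {H : Type*} [NormedAddCommGroup H] [InnerProductSpace ℂ H] [CompleteSpace H]
    (U V : H →L[ℂ] H) (hsub : Set.range U ⊆ Set.range V) :
    ∃ W : H →L[ℂ] H, U = V.comp W := by
  haveI : CompleteSpace (LinearMap.ker (V : H →ₗ[ℂ] H)) :=
    by have := (ContinuousLinearMap.isClosed_ker V).completeSpace_coe; exact this
  set K : Submodule ℂ H := (LinearMap.ker (V : H →ₗ[ℂ] H))ᗮ with hK
  set Vk : K →ₗ[ℂ] H := V.toLinearMap.domRestrict K with hVk
  have hVk_apply : ∀ y : K, Vk y = V (y : H) := fun y => rfl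
  have hinj : Function.Injective Vk := by
    rw [← LinearMap.ker_eq_bot, LinearMap.ker_eq_bot']
    rintro ⟨m, hm⟩ hm0
    have hmker : m ∈ LinearMap.ker (V : H →ₗ[ℂ] H) := hm0
    have hd := (LinearMap.ker (V : H →ₗ[ℂ] H)).orthogonal_disjoint.le_bot
      (Submodule.mem_inf.mpr ⟨hmker, hm⟩)
    exact Subtype.ext (by simpa using hd)
  set e := LinearEquiv.ofInjective Vk hinj with he
  have hmem : ∀ f : H, U f ∈ LinearMap.range Vk := by
    intro f
    obtain ⟨g, hg⟩ := hsub ⟨f, rfl⟩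
    set q : H := g - (Submodule.orthogonalProjectionOnto (LinearMap.ker (V : H →ₗ[ℂ] H)) g : H) with hq
    have hqK : q ∈ K := Submodule.sub_starProjection_mem_orthogonal (K := LinearMap.ker (V : H →ₗ[ℂ] H)) g
    have hVq : V q = U f := by
      have hpker : ((Submodule.orthogonalProjectionOnto (LinearMap.ker (V : H →ₗ[ℂ] H)) g : H)) ∈ LinearMap.ker (V : H →ₗ[ℂ] H) :=
        (Submodule.orthogonalProjectionOnto (LinearMap.ker (V : H →ₗ[ℂ] H)) g).2
      have hV0 : V ((Submodule.orthogonalProjectionOnto (LinearMap.ker (V : H →ₗ[ℂ] H)) g : H)) = 0 := hpker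
      rw [hq, map_sub, hV0, hg, sub_zero]
    exact ⟨⟨q, hqK⟩, by simpa [hVk_apply] using hVq⟩
  set W₀ : H →ₗ[ℂ] H :=
    K.subtype ∘ₗ (e.symm.toLinearMap ∘ₗ
      LinearMap.codRestrict (LinearMap.range Vk) U.toLinearMap hmem) with hW₀
  have hW₀_apply : ∀ f : H, W₀ f = (e.symm ⟨U f, hmem f⟩ : H) := fun f => rfl
  have hWK : ∀ f : H, W₀ f ∈ K := fun f => (e.symm ⟨U f, hmem f⟩).2
  have hVk_symm : ∀ y : LinearMap.range Vk, Vk (e.symm y) = (y : H) := by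
    intro y
    conv_rhs => rw [← e.apply_symm_apply y]
    simp [he]
  have hVW : ∀ f : H, V (W₀ f) = U f := by
    intro f
    rw [hW₀_apply f]
    have := hVk_symm ⟨U f, hmem f⟩
    simpa [hVk_apply] using this
  have hcont : ∀ (u : ℕ → H) (s y : H), Filter.Tendsto u Filter.atTop (nhds s) →
      Filter.Tendsto (W₀ ∘ u) Filter.atTop (nhds y) → y = W₀ s := by
    intro u s y hu hWu
    have hyK : y ∈ K := by
      have hKclosed : IsClosed (K : Set H) := Submodule.isClosed_orthogonal _
      exact hKclosed.mem_of_tendsto hWu (Filter.Eventually.of_forall fun n => hWK (u n))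
    have hVy : V y = U s := by
      have h1 : Filter.Tendsto (fun n => V (W₀ (u n))) Filter.atTop (nhds (V y)) :=
        (V.continuous.tendsto y).comp hWu
      have h2 : Filter.Tendsto (fun n => U (u n)) Filter.atTop (nhds (U s)) :=
        (U.continuous.tendsto s).comp hu
      have h3 : (fun n => V (W₀ (u n))) = fun n => U (u n) := by
        funext n; exact hVW (u n)
      rw [h3] at h1
      exact tendsto_nhds_unique h1 h2
    have hdiff : y - W₀ s ∈ (LinearMap.ker (V : H →ₗ[ℂ] H)) ⊓ K := by
      refine Submodule.mem_inf.mpr ⟨?_, K.sub_mem hyK (hWK s)⟩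
      have : V (y - W₀ s) = 0 := by rw [map_sub, hVy, hVW s, sub_self]
      exact this
    have hz := (LinearMap.ker (V : H →ₗ[ℂ] H)).orthogonal_disjoint.le_bot hdiff
    have : y - W₀ s = 0 := by simpa using hz
    exact sub_eq_zero.mp this
  refine ⟨ContinuousLinearMap.ofSeqClosedGraph hcont, ?_⟩
  ext f
  have : (ContinuousLinearMap.ofSeqClosedGraph hcont) f = W₀ f := rfl
  simp only [ContinuousLinearMap.comp_apply, this]
  exact (hVW f).symm

/-- Douglas' factorization theorem. -/
theorem douglas_factorization
    {H : Type*} [NormedAddCommGroup H] [InnerProductSpace ℂ H] [CompleteSpace H]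
    (U V : H →L[ℂ] H) :
    (Set.range U ⊆ Set.range V ↔
      ∃ l : ℝ, 0 < l ∧ ∀ f : H,
        ‖ContinuousLinearMap.adjoint U f‖ ^ 2 ≤ l ^ 2 * ‖ContinuousLinearMap.adjoint V f‖ ^ 2) ∧
    (Set.range U ⊆ Set.range V ↔ ∃ W : H →L[ℂ] H, U = V.comp W) := by
  have hCA : (∃ W : H →L[ℂ] H, U = V.comp W) → Set.range U ⊆ Set.range V := by
    rintro ⟨W, rfl⟩ x ⟨g, rfl⟩
    exact ⟨W g, rfl⟩
  have hCB : (∃ W : H →L[ℂ] H, U = V.comp W) →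
      ∃ l : ℝ, 0 < l ∧ ∀ f : H,
        ‖ContinuousLinearMap.adjoint U f‖ ^ 2 ≤ l ^ 2 * ‖ContinuousLinearMap.adjoint V f‖ ^ 2 := by
    rintro ⟨W, rfl⟩
    refine ⟨‖ContinuousLinearMap.adjoint W‖ + 1, by positivity, fun f => ?_⟩
    have h1 : ContinuousLinearMap.adjoint (V.comp W) =
        (ContinuousLinearMap.adjoint W).comp (ContinuousLinearMap.adjoint V) :=
      ContinuousLinearMap.adjoint_comp V W
    have h2 : ‖ContinuousLinearMap.adjoint (V.comp W) f‖ ≤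
        (‖ContinuousLinearMap.adjoint W‖ + 1) * ‖ContinuousLinearMap.adjoint V f‖ := by
      rw [h1]
      calc ‖(ContinuousLinearMap.adjoint W) ((ContinuousLinearMap.adjoint V) f)‖
          ≤ ‖ContinuousLinearMap.adjoint W‖ * ‖ContinuousLinearMap.adjoint V f‖ :=
            ContinuousLinearMap.le_opNorm _ _
        _ ≤ (‖ContinuousLinearMap.adjoint W‖ + 1) * ‖ContinuousLinearMap.adjoint V f‖ := by
            apply mul_le_mul_of_nonneg_right (by linarith) (norm_nonneg _)
    calc ‖ContinuousLinearMap.adjoint (V.comp W) f‖ ^ 2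
        ≤ ((‖ContinuousLinearMap.adjoint W‖ + 1) * ‖ContinuousLinearMap.adjoint V f‖) ^ 2 :=
          pow_le_pow_left₀ (norm_nonneg _) h2 2
      _ = (‖ContinuousLinearMap.adjoint W‖ + 1) ^ 2 * ‖ContinuousLinearMap.adjoint V f‖ ^ 2 := by
          ring
  have hBA : (∃ l : ℝ, 0 < l ∧ ∀ f : H,
      ‖ContinuousLinearMap.adjoint U f‖ ^ 2 ≤ l ^ 2 * ‖ContinuousLinearMap.adjoint V f‖ ^ 2) →
      Set.range U ⊆ Set.range V := by
    rintro ⟨l, hl, hb⟩ x ⟨g, rfl⟩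
    apply mem_range_of_inner_bound V (U g) (‖g‖ * l)
    intro f
    have hb' : ‖ContinuousLinearMap.adjoint U f‖ ≤ l * ‖ContinuousLinearMap.adjoint V f‖ := by
      have := hb f
      have h2 : ‖ContinuousLinearMap.adjoint U f‖ ^ 2 ≤
          (l * ‖ContinuousLinearMap.adjoint V f‖) ^ 2 := by
        rw [mul_pow]; exact this
      exact (pow_le_pow_iff_left₀ (norm_nonneg _) (by positivity) two_ne_zero).mp h2
    calc ‖⟪U g, f⟫‖ = ‖⟪g, ContinuousLinearMap.adjoint U f⟫‖ := by
          rw [ContinuousLinearMap.adjoint_inner_right U g f]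
      _ ≤ ‖g‖ * ‖ContinuousLinearMap.adjoint U f‖ := norm_inner_le_norm g _
      _ ≤ ‖g‖ * (l * ‖ContinuousLinearMap.adjoint V f‖) :=
          mul_le_mul_of_nonneg_left hb' (norm_nonneg g)
      _ = (‖g‖ * l) * ‖ContinuousLinearMap.adjoint V f‖ := by ring
  have hAC : Set.range U ⊆ Set.range V ↔ ∃ W : H →L[ℂ] H, U = V.comp W :=
    ⟨factor_of_range_subset U V, hCA⟩
  exact ⟨⟨fun hA => hCB (hAC.mp hA), hBA⟩, hAC⟩
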